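/- Let σ : X → Y be a covering map between second-countable, locally compact, Hausdorff, totally disconnected spaces. Then Y can be written as a countable disjoint union Y = ⋃ᵢ Wᵢ of nonempty compact open sets Wᵢ such that for each i, σ⁻¹(Wᵢ) is a countable disjoint union of compact open sets each mapped homeomorphically onto Wᵢ by σ. -/

import Mathlib

open Set Topology Function

lemma exists_compactOpen_nhd {H : Type*} [TopologicalSpace H] [LocallyCompactSpace H]
    [T2Space H] [TotallyDisconnectedSpace H] {U : Set H} (hU : IsOpen U) {x : H} (hx : x ∈ U) :
    ∃ W : Set H, x ∈ W ∧ IsCompact W ∧ IsOpen W ∧ W ⊆ U := by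
  obtain ⟨s, scomp, xs, sU⟩ := exists_compact_subset hU hx
  obtain ⟨V, hV, hxV, hVs⟩ := (loc_compact_Haus_tot_disc_of_zero_dim.mem_nhds_iff).1
    (isOpen_interior.mem_nhds xs)
  exact ⟨V, hxV, scomp.of_isClosed_subset hV.1 (hVs.trans interior_subset),
    hV.2, (hVs.trans interior_subset).trans sU⟩

lemma inner_decomp {X Y : Type*} [TopologicalSpace X] [TopologicalSpace Y]
    [SecondCountableTopology X] [T2Space Y]
    {σ : X → Y} (hσc : Continuous σ)
    {I : Type*} [TopologicalSpace I] [DiscreteTopology I] (t : Bundle.Trivialization I σ)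
    {W : Set Y} (hWne : W.Nonempty) (hWc : IsCompact W) (hWo : IsOpen W)
    (hWb : W ⊆ t.baseSet) :
    ∃ (κ : Type) (_ : Countable κ) (U : κ → Set X),
      Pairwise (Function.onFun Disjoint U) ∧ (⋃ j, U j) = σ ⁻¹' W ∧
      ∀ j, IsCompact (U j) ∧ IsOpen (U j) ∧
        ∃ e : (U j) ≃ₜ W, ∀ x : U j, (e x : Y) = σ x := by
  set V : I → Set X := fun j => t.source ∩ t ⁻¹' (W ×ˢ ({j} : Set I)) with hV
  -- image description
  have himg : ∀ j, V j = t.toOpenPartialHomeomorph.symm '' (W ×ˢ ({j} : Set I)) := by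
    intro j
    ext x
    constructor
    · rintro ⟨hxs, hxp⟩
      exact ⟨t x, hxp, t.toOpenPartialHomeomorph.left_inv hxs⟩
    · rintro ⟨p, hp, rfl⟩
      have hpt : p ∈ t.target := by
        rw [t.target_eq]
        exact ⟨hWb hp.1, mem_univ _⟩
      refine ⟨t.toOpenPartialHomeomorph.map_target hpt, ?_⟩
      rw [mem_preimage, t.apply_symm_apply hpt]
      exact hp
  have hVproj : ∀ j, ∀ x ∈ V j, σ x ∈ W := by
    rintro j x ⟨hxs, hxp⟩
    have := t.coe_fst hxs
    rw [← this]
    exact hxp.1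
  have hdisj : Pairwise (Function.onFun Disjoint V) := by
    intro i j hij
    rw [Function.onFun, Set.disjoint_left]
    rintro x ⟨hxs, hxp⟩ ⟨hys, hyp⟩
    exact hij (hxp.2.symm.trans hyp.2)
  have hopen : ∀ j, IsOpen (V j) :=
    fun j => t.toOpenPartialHomeomorph.isOpen_inter_preimage (hWo.prod (isOpen_discrete _))
  have hcomp : ∀ j, IsCompact (V j) := by
    intro j
    rw [himg]
    refine (hWc.prod isCompact_singleton).image_of_continuousOn
      (t.toOpenPartialHomeomorph.continuousOn_symm.mono ?_)
    rw [t.target_eq]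
    exact prod_mono hWb (subset_univ _)
  have hne : ∀ j, (V j).Nonempty := by
    intro j
    rw [himg]
    exact ((hWne.prod (singleton_nonempty j)).image _)
  have hiU : (⋃ j, V j) = σ ⁻¹' W := by
    ext x
    simp only [mem_iUnion, mem_preimage]
    constructor
    · rintro ⟨j, hj⟩; exact hVproj j x hj
    · intro hx
      have hxs : x ∈ t.source := t.mem_source.2 (hWb hx)
      exact ⟨(t x).2, hxs, ⟨by rwa [t.coe_fst hxs], rfl⟩⟩
  have hcnt : Countable I := hdisj.countable_of_isOpen_disjoint hopen hne
  -- homeomorphisms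
  have hhomeo : ∀ j : I, ∃ e : (V j) ≃ₜ W, ∀ x : V j, (e x : Y) = σ x := by
    intro j
    have key : ∀ x : V j, σ (x : X) ∈ W := fun x => hVproj j x x.2
    have hmemV : ∀ w : W, t.toOpenPartialHomeomorph.symm ((w : Y), j) ∈ V j := by
      intro w
      rw [himg]
      exact ⟨((w : Y), j), ⟨w.2, rfl⟩, rfl⟩
    have teq : ∀ x : V j, t (x : X) = (σ (x : X), j) := by
      rintro ⟨x, hxs, hxp⟩
      exact Prod.ext (t.coe_fst hxs) hxp.2
    let E : (V j) ≃ W :=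
      { toFun := fun x => ⟨σ x, key x⟩
        invFun := fun w => ⟨t.toOpenPartialHomeomorph.symm ((w : Y), j), hmemV w⟩
        left_inv := by
          rintro ⟨x, hx⟩
          have hxs : x ∈ t.source := hx.1
          ext
          simp only
          rw [← teq ⟨x, hx⟩]
          exact t.toOpenPartialHomeomorph.left_inv hxs
        right_inv := by
          rintro ⟨w, hw⟩
          ext
          simp only
          exact t.proj_symm_apply' (hWb hw) }
    have hc : Continuous (E : (V j) → W) :=
      Continuous.subtype_mk (hσc.comp continuous_subtype_val) _
    have : CompactSpace (V j) := isCompact_iff_compactSpace.1 (hcomp j)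
    exact ⟨hc.homeoOfEquivCompactToT2, fun x => rfl⟩
  -- reindex to Type 0
  obtain ⟨g, hg⟩ := Countable.exists_injective_nat I
  let eqv : Set.range g ≃ I := (Equiv.ofInjective g hg).symm
  refine ⟨Set.range g, inferInstance, V ∘ eqv, ?_, ?_, ?_⟩
  · intro a b hab
    exact hdisj (eqv.injective.ne hab)
  · rw [Function.comp_def, eqv.surjective.iUnion_comp]
    exact hiU
  · intro j
    exact ⟨hcomp _, hopen _, hhomeo _⟩


/-- Let `σ : X → Y` be a (surjective) covering map between
second-countable, locally compact, Hausdorff, totally disconnected spaces. Then `Y` is a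
countable disjoint union of nonempty compact open sets `Wᵢ` such that each `σ ⁻¹' Wᵢ` is
a countable disjoint union of compact open sets, each mapped homeomorphically onto `Wᵢ`
by `σ`. -/
theorem coveringMap_countable_clopen_decomposition
    {X Y : Type*} [TopologicalSpace X] [TopologicalSpace Y]
    [SecondCountableTopology X] [SecondCountableTopology Y]
    [LocallyCompactSpace X] [LocallyCompactSpace Y]
    [T2Space X] [T2Space Y]
    [TotallyDisconnectedSpace X] [TotallyDisconnectedSpace Y]
    (σ : X → Y) (hsurj : Function.Surjective σ) (hσ : IsCoveringMap σ) :
    ∃ (ι : Type) (_ : Countable ι) (W : ι → Set Y),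
      Pairwise (Function.onFun Disjoint W) ∧ (⋃ i, W i) = Set.univ ∧
      (∀ i, (W i).Nonempty ∧ IsCompact (W i) ∧ IsOpen (W i)) ∧
      ∀ i, ∃ (κ : Type) (_ : Countable κ) (U : κ → Set X),
        Pairwise (Function.onFun Disjoint U) ∧ (⋃ j, U j) = σ ⁻¹' (W i) ∧
        ∀ j, IsCompact (U j) ∧ IsOpen (U j) ∧
          ∃ e : (U j) ≃ₜ (W i), ∀ x : U j, (e x : Y) = σ x := by
  rcases isEmpty_or_nonempty Y with hY | hY
  · refine ⟨Empty, inferInstance, fun i => i.elim, fun i => i.elim, ?_, fun i => i.elim,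
      fun i => i.elim⟩
    simp [Set.univ_eq_empty_iff.2 hY]
  · haveI hfne : ∀ y : Y, Nonempty (σ ⁻¹' {y}) := fun y => ⟨⟨_, (hsurj y).choose_spec⟩⟩
    have hCW : ∀ y : Y, ∃ W : Set Y, y ∈ W ∧ IsCompact W ∧ IsOpen W ∧
        W ⊆ (hσ y).toTrivialization.baseSet := fun y =>
      exists_compactOpen_nhd (hσ y).toTrivialization.open_baseSet
        (hσ y).mem_toTrivialization_baseSet
    choose Wf hmem hWcomp hWopen hWsub using hCW
    obtain ⟨s, hsc, hscov⟩ := TopologicalSpace.countable_cover_nhds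
      (fun y => (hWopen y).mem_nhds (hmem y))
    have hsne : s.Nonempty := by
      rcases Set.eq_empty_or_nonempty s with h | h
      · exfalso
        rw [h] at hscov
        simp only [Set.mem_empty_iff_false, Set.iUnion_of_empty, Set.iUnion_false,
          Set.iUnion_empty] at hscov
        exact (Set.univ_eq_empty_iff.1 hscov.symm).false hY.some
      · exact h
    obtain ⟨f, hf⟩ := Set.Countable.exists_eq_range hsc hsne
    set A : ℕ → Set Y := fun n => Wf (f n) with hA
    have hcovA : ⋃ n, A n = Set.univ := by
      rw [← hscov, hf, Set.biUnion_range]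
    set D : ℕ → Set Y := fun n => A n \ ⋃ i ∈ Finset.range n, A i with hD
    have hDopen : ∀ n, IsOpen (D n) := fun n =>
      (hWopen (f n)).sdiff (Set.Finite.isClosed_biUnion (Finset.range n).finite_toSet
        fun i _ => (hWcomp (f i)).isClosed)
    have hDcomp : ∀ n, IsCompact (D n) := fun n =>
      (hWcomp (f n)).diff (isOpen_biUnion fun i _ => hWopen (f i))
    have hDsub : ∀ n, D n ⊆ A n := fun n => Set.diff_subset
    have key : ∀ m n : ℕ, m < n → Disjoint (D n) (D m) := by
      intro m n hmn
      rw [Set.disjoint_left]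
      rintro y ⟨_, hyn⟩ hym
      exact hyn (Set.mem_biUnion (Finset.mem_range.2 hmn) (hDsub m hym))
    have hDdisj : Pairwise (Function.onFun Disjoint D) := by
      intro m n hmn
      rcases hmn.lt_or_gt with h | h
      · exact (key m n h).symm
      · exact key n m h
    have hDcov : ⋃ n, D n = Set.univ := by
      rw [Set.eq_univ_iff_forall]
      intro y
      classical
      have hy : ∃ n, y ∈ A n := by
        have := Set.eq_univ_iff_forall.1 hcovA y
        simpa [Set.mem_iUnion] using this
      refine Set.mem_iUnion.2 ⟨Nat.find hy, Nat.find_spec hy, ?_⟩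
      intro hmem'
      obtain ⟨i, hi, hyi⟩ := Set.mem_iUnion₂.1 hmem'
      exact Nat.find_min hy (Finset.mem_range.1 hi) hyi
    refine ⟨{n : ℕ // (D n).Nonempty}, inferInstance, fun i => D i.1, ?_, ?_, ?_, ?_⟩
    · intro i j hij
      have : i.1 ≠ j.1 := fun h => hij (Subtype.ext h)
      exact hDdisj this
    · rw [Set.eq_univ_iff_forall]
      intro y
      obtain ⟨n, hn⟩ := Set.mem_iUnion.1 (Set.eq_univ_iff_forall.1 hDcov y)
      exact Set.mem_iUnion.2 ⟨⟨n, ⟨y, hn⟩⟩, hn⟩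
    · exact fun i => ⟨i.2, hDcomp i.1, hDopen i.1⟩
    · rintro ⟨n, hn⟩
      haveI : DiscreteTopology (σ ⁻¹' {f n}) := (hσ (f n)).1
      exact inner_decomp hσ.continuous (hσ (f n)).toTrivialization hn (hDcomp n) (hDopen n)
        ((hDsub n).trans (hWsub (f n)))
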